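/- Let r ≥ 2, k ≥ 1, and work in R = MvPolynomial (Fin k) ℚ. For every t with 1 ≤ t ≤ r, every injective map i : Fin t → Fin r, and every injective map j : Fin t → Fin k, the coefficient of the monomial ∏_{s ∈ Fin t} X_{j(s)}^{i(s)·r^k} in the determinant of the block matrix G whose (u,v) block equals X_{j(v)}^{i(u)} · Q_{j(v)}^{i(u)} is equal to 1 or −1; this monomial has total degree r^k·(i(1)+⋯+i(t)), which is the maximal total degree of the determinant. -/

import Mathlib

open MvPolynomial

lemma transMat_pow {V : Type*} [AddCommGroup V] [Fintype V] [DecidableEq V]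
    {R : Type*} [CommRing R] (e : V) (n : ℕ) :
    ∀ x y : V, ((Matrix.of fun x y : V => if x = y + e then (1:R) else 0) ^ n) x y
      = if x = y + n • e then 1 else 0 := by
  induction n with
  | zero => intro x y; simp [Matrix.one_apply]
  | succ n ih =>
    intro x y
    rw [pow_succ, Matrix.mul_apply]
    simp only [ih, Matrix.of_apply]
    rw [Finset.sum_eq_single (y + e)]
    · simp [succ_nsmul, add_assoc, add_comm e (n • e)]
    · intro z _ hz; simp [hz]
    · simp

lemma prod_monomial_one {σ R α : Type*} [CommSemiring R] (s : Finset α) (d : α → (σ →₀ ℕ)) :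
    ∏ a ∈ s, MvPolynomial.monomial (d a) (1:R) = MvPolynomial.monomial (∑ a ∈ s, d a) 1 := by
  induction s using Finset.cons_induction with
  | empty => simp
  | cons a s ha ih =>
    rw [Finset.prod_cons, Finset.sum_cons, ih, MvPolynomial.monomial_mul, one_mul]

lemma sum_single_degree {α β : Type*} [Fintype β] [DecidableEq β] (s : Finset α)
    (b : α → β) (v : α → ℕ) :
    ((∑ a ∈ s, Finsupp.single (b a) (v a)).sum fun _ n => n) = ∑ a ∈ s, v a := by
  rw [Finsupp.sum_fintype _ _ (fun _ => rfl)]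
  simp only [Finsupp.finset_sum_apply, Finsupp.single_apply]
  rw [Finset.sum_comm]
  simp [Finset.sum_ite_eq Finset.univ]


/-- In `det G` (with `G` as in Statement 1, over
`MvPolynomial (Fin k) ℚ`), the coefficient of the monomial
`∏ s, X (j s) ^ (i s * r ^ k)` is `1` or `-1`; this monomial has total degree
`r ^ k * ∑ s, i s`, which is the (maximal) total degree of the determinant. -/
theorem construction1_det_leading_monomial (r k : ℕ) (hr : 2 ≤ r) (hk : 1 ≤ k)
    (t : ℕ) (ht1 : 1 ≤ t) (ht2 : t ≤ r)
    (i : Fin t → Fin r) (hi : Function.Injective i)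
    (j : Fin t → Fin k) (hj : Function.Injective j) :
    haveI : NeZero r := ⟨by omega⟩
    let G : Matrix (Fin t × (Fin k → ZMod r)) (Fin t × (Fin k → ZMod r))
        (MvPolynomial (Fin k) ℚ) :=
      Matrix.of fun p q =>
        (X (j q.1) : MvPolynomial (Fin k) ℚ) ^ (i p.1 : ℕ) *
          ((Matrix.of fun (x y : Fin k → ZMod r) =>
              if x = y + Pi.single (j q.1) 1 then (1 : MvPolynomial (Fin k) ℚ) else 0) ^
            (i p.1 : ℕ)) p.2 q.2
    let m : Fin k →₀ ℕ := ∑ s : Fin t, Finsupp.single (j s) ((i s : ℕ) * r ^ k)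
    (MvPolynomial.coeff m G.det = 1 ∨ MvPolynomial.coeff m G.det = -1) ∧
      (m.sum fun _ n => n) = r ^ k * ∑ s : Fin t, (i s : ℕ) ∧
      G.det.totalDegree = r ^ k * ∑ s : Fin t, (i s : ℕ) := by
  haveI : NeZero r := ⟨by omega⟩
  intro G m
  have hG : ∀ p q : Fin t × (Fin k → ZMod r),
      G p q = if p.2 = q.2 + ((i p.1 : ℕ)) • Pi.single (j q.1) 1
        then X (j q.1) ^ (i p.1 : ℕ) else 0 := by
    intro p q
    show (X (j q.1) : MvPolynomial (Fin k) ℚ) ^ (i p.1 : ℕ) * _ = _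
    rw [transMat_pow, mul_ite, mul_one, mul_zero]
  have cardV : Fintype.card (Fin k → ZMod r) = r ^ k := by
    simp [ZMod.card]
  -- the distinguished permutation
  set σ₀ : Equiv.Perm (Fin t × (Fin k → ZMod r)) :=
    { toFun := fun q => (q.1, q.2 + ((i q.1 : ℕ)) • Pi.single (j q.1) 1)
      invFun := fun q => (q.1, q.2 - ((i q.1 : ℕ)) • Pi.single (j q.1) 1)
      left_inv := fun q => by simp
      right_inv := fun q => by simp } with hσ₀def
  -- m evaluated at j s
  have hm_apply : ∀ s : Fin t, m (j s) = (i s : ℕ) * r ^ k := by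
    intro s
    show (∑ s' : Fin t, Finsupp.single (j s') ((i s' : ℕ) * r ^ k)) (j s) = _
    rw [Finsupp.finset_sum_apply]
    simp only [Finsupp.single_apply, hj.eq_iff]
    rw [Finset.sum_ite_eq' Finset.univ s]
    simp
  -- slice cardinality
  have hcard_slice : ∀ u : Fin t,
      (Finset.univ.filter fun q : Fin t × (Fin k → ZMod r) => q.1 = u).card = r ^ k := by
    intro u
    have : (Finset.univ.filter fun q : Fin t × (Fin k → ZMod r) => q.1 = u)
        = Finset.univ.map ⟨fun y => (u, y), fun a b h => congrArg Prod.snd h⟩ := by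
      ext q
      simp only [Finset.mem_filter, Finset.mem_univ, true_and, Finset.mem_map,
        Function.Embedding.coeFn_mk]
      constructor
      · intro h1; exact ⟨q.2, by rw [← h1]; rfl⟩
      · rintro ⟨y, rfl⟩; rfl
    rw [this, Finset.card_map, Finset.card_univ, cardV]
  have hbal : ∀ σ : Equiv.Perm (Fin t × (Fin k → ZMod r)), ∀ u : Fin t,
      (Finset.univ.filter fun q : Fin t × (Fin k → ZMod r) => (σ q).1 = u).card = r ^ k := by
    intro σ u
    rw [← hcard_slice u]
    apply Finset.card_bij (fun q _ => σ q)
    · intro q hq; simp only [Finset.mem_filter, Finset.mem_univ, true_and] at hq ⊢; exact hq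
    · intro a _ b _ h; exact σ.injective h
    · intro b hb
      refine ⟨σ.symm b, ?_, by simp⟩
      simp only [Finset.mem_filter, Finset.mem_univ, true_and] at hb ⊢
      simpa using hb
  -- main combinatorial uniqueness
  have main : ∀ σ : Equiv.Perm (Fin t × (Fin k → ZMod r)),
      (∀ s : Fin t, ∑ y : Fin k → ZMod r, ((i ((σ (s, y)).1) : ℕ)) = (i s : ℕ) * r ^ k) →
      ∀ q, (σ q).1 = q.1 := by
    intro σ hrow
    have key : ∀ c : ℕ, ∀ s : Fin t, (i s : ℕ) < c → ∀ y, (σ (s, y)).1 = s := by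
      intro c
      induction c with
      | zero => intro s hs; exact absurd hs (Nat.not_lt_zero _)
      | succ c ih =>
        intro s hs y
        by_cases hlt : (i s : ℕ) < c
        · exact ih s hlt y
        · have hc : (i s : ℕ) = c := by omega
          have hfull : ∀ u : Fin t, (i u : ℕ) < c →
              ∀ q : Fin t × (Fin k → ZMod r), (σ q).1 = u → q.1 = u := by
            intro u hu q hq
            have hsub : (Finset.univ.filter fun q : Fin t × (Fin k → ZMod r) => q.1 = u)
                ⊆ (Finset.univ.filter fun q => (σ q).1 = u) := by
              intro p hp
              simp only [Finset.mem_filter, Finset.mem_univ, true_and] at hp ⊢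
              obtain ⟨p1, p2⟩ := p
              cases hp
              exact ih _ hu p2
            have heq := Finset.eq_of_subset_of_card_le hsub
              (by rw [hbal σ u, hcard_slice u])
            have hqmem : q ∈ (Finset.univ.filter
                fun q : Fin t × (Fin k → ZMod r) => (σ q).1 = u) := by
              simp [hq]
            rw [← heq] at hqmem
            simpa using hqmem
          have hge : ∀ y' : Fin k → ZMod r, c ≤ (i ((σ (s, y')).1) : ℕ) := by
            intro y'
            by_contra h
            push_neg at h
            have h2 := hfull _ h (s, y') rfl
            have h3 : (i s : ℕ) < c := by
              rw [show s = ((σ (s, y')).1) from h2]; exact h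
            omega
          have hconst : (∑ _y' : Fin k → ZMod r, c) = (i s : ℕ) * r ^ k := by
            rw [Finset.sum_const, Finset.card_univ, cardV, smul_eq_mul, hc, mul_comm]
          have heach := (Finset.sum_eq_sum_iff_of_le
            (fun y' _ => hge y')).mp (by rw [hconst, hrow s])
          have hval : (i ((σ (s, y)).1) : ℕ) = (i s : ℕ) := by
            rw [hc]; exact (heach y (Finset.mem_univ y)).symm
          exact hi (Fin.val_injective hval)
    intro q
    have := key r q.1 (i q.1).isLt q.2
    rwa [Prod.mk.eta] at this
  -- row sums from exponent equality
  have hrow_of_E : ∀ σ : Equiv.Perm (Fin t × (Fin k → ZMod r)),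
      (∑ q : Fin t × (Fin k → ZMod r), Finsupp.single (j q.1) ((i ((σ q).1) : ℕ))) = m →
      ∀ s : Fin t, ∑ y : Fin k → ZMod r, ((i ((σ (s, y)).1) : ℕ)) = (i s : ℕ) * r ^ k := by
    intro σ hE s
    have h2 := DFunLike.congr_fun hE (j s)
    rw [Finsupp.finset_sum_apply, hm_apply s] at h2
    simp only [Finsupp.single_apply, hj.eq_iff] at h2
    rw [Fintype.sum_prod_type] at h2
    have hswap : ∀ u : Fin t,
        (∑ y : Fin k → ZMod r, if u = s then (i ((σ (u, y)).1) : ℕ) else 0)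
          = if u = s then ∑ y : Fin k → ZMod r, (i ((σ (u, y)).1) : ℕ) else 0 := by
      intro u; split_ifs <;> simp
    rw [Finset.sum_congr rfl (fun u _ => hswap u), Finset.sum_ite_eq' Finset.univ s] at h2
    simpa using h2
  -- σ₀ satisfies everything
  have hC₀ : ∀ q : Fin t × (Fin k → ZMod r),
      (σ₀ q).2 = q.2 + ((i ((σ₀ q).1) : ℕ)) • Pi.single (j q.1) 1 := fun q => rfl
  have hE₀ : (∑ q : Fin t × (Fin k → ZMod r),
      Finsupp.single (j q.1) ((i ((σ₀ q).1) : ℕ))) = m := by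
    show (∑ q : Fin t × (Fin k → ZMod r), Finsupp.single (j q.1) ((i q.1 : ℕ))) = m
    rw [Fintype.sum_prod_type]
    show (∑ u : Fin t, ∑ _y : Fin k → ZMod r, Finsupp.single (j u) ((i u : ℕ)))
      = ∑ s : Fin t, Finsupp.single (j s) ((i s : ℕ) * r ^ k)
    refine Finset.sum_congr rfl fun u _ => ?_
    rw [Finset.sum_const, Finset.card_univ, cardV, Finsupp.smul_single, smul_eq_mul, mul_comm]
  -- coefficient of each Leibniz term
  have hprod : ∀ σ : Equiv.Perm (Fin t × (Fin k → ZMod r)),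
      MvPolynomial.coeff m (∏ q : Fin t × (Fin k → ZMod r), G (σ q) q)
        = if σ = σ₀ then 1 else 0 := by
    intro σ
    by_cases hC : ∀ q : Fin t × (Fin k → ZMod r),
        (σ q).2 = q.2 + ((i ((σ q).1) : ℕ)) • Pi.single (j q.1) 1
    · have hprodeq : (∏ q : Fin t × (Fin k → ZMod r), G (σ q) q)
          = MvPolynomial.monomial
            (∑ q : Fin t × (Fin k → ZMod r), Finsupp.single (j q.1) ((i ((σ q).1) : ℕ))) 1 := by
        rw [← prod_monomial_one]
        refine Finset.prod_congr rfl fun q _ => ?_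
        rw [hG, if_pos (hC q), X_pow_eq_monomial]
      rw [hprodeq, MvPolynomial.coeff_monomial]
      by_cases hEm : (∑ q : Fin t × (Fin k → ZMod r),
          Finsupp.single (j q.1) ((i ((σ q).1) : ℕ))) = m
      · rw [if_pos hEm, if_pos]
        have hfst := main σ (hrow_of_E σ hEm)
        refine Equiv.ext fun q => Prod.ext (hfst q) ?_
        show (σ q).2 = q.2 + ((i q.1 : ℕ)) • Pi.single (j q.1) 1
        rw [hC q, hfst q]
      · rw [if_neg hEm, if_neg]
        intro hcontra
        exact hEm (hcontra ▸ hE₀)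
    · push_neg at hC
      obtain ⟨q, hq⟩ := hC
      have hz : G (σ q) q = 0 := by rw [hG]; exact if_neg hq
      have hzero : (∏ p : Fin t × (Fin k → ZMod r), G (σ p) p) = 0 :=
        Finset.prod_eq_zero (Finset.mem_univ q) hz
      rw [hzero, MvPolynomial.coeff_zero, if_neg]
      intro hcontra
      rw [hcontra] at hq
      exact hq (hC₀ q)
  -- the coefficient of m in the determinant
  have hcoeffdet : MvPolynomial.coeff m G.det
      = (Equiv.Perm.sign σ₀ : ℤˣ) • (1 : ℚ) := by
    rw [Matrix.det_apply, MvPolynomial.coeff_sum]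
    have hterm : ∀ σ : Equiv.Perm (Fin t × (Fin k → ZMod r)),
        MvPolynomial.coeff m (Equiv.Perm.sign σ • ∏ q, G (σ q) q)
          = if σ = σ₀ then (Equiv.Perm.sign σ₀ : ℤˣ) • (1 : ℚ) else 0 := by
      intro σ
      rw [MvPolynomial.coeff_smul, hprod σ]
      split_ifs with h
      · rw [h]
      · simp
    rw [Finset.sum_congr rfl (fun σ _ => hterm σ), Finset.sum_ite_eq' Finset.univ σ₀]
    simp
  have hOr : MvPolynomial.coeff m G.det = 1 ∨ MvPolynomial.coeff m G.det = -1 := by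
    rcases Int.units_eq_one_or (Equiv.Perm.sign σ₀) with h | h
    · left; rw [hcoeffdet, h, one_smul]
    · right; rw [hcoeffdet, h]; simp [Units.smul_def]
  have hmsum : (m.sum fun _ n => n) = r ^ k * ∑ s : Fin t, (i s : ℕ) := by
    show ((∑ s : Fin t, Finsupp.single (j s) ((i s : ℕ) * r ^ k)).sum fun _ n => n) = _
    rw [sum_single_degree, Finset.mul_sum]
    exact Finset.sum_congr rfl fun s _ => mul_comm _ _
  refine ⟨hOr, hmsum, le_antisymm ?_ ?_⟩
  · rw [Matrix.det_apply]
    refine (MvPolynomial.totalDegree_finset_sum _ _).trans (Finset.sup_le fun σ _ => ?_)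
    rw [Units.smul_def]
    refine (MvPolynomial.totalDegree_smul_le _ _).trans ?_
    by_cases hC : ∀ q : Fin t × (Fin k → ZMod r),
        (σ q).2 = q.2 + ((i ((σ q).1) : ℕ)) • Pi.single (j q.1) 1
    · have hprodeq : (∏ q : Fin t × (Fin k → ZMod r), G (σ q) q)
          = MvPolynomial.monomial
            (∑ q : Fin t × (Fin k → ZMod r), Finsupp.single (j q.1) ((i ((σ q).1) : ℕ))) 1 := by
        rw [← prod_monomial_one]
        refine Finset.prod_congr rfl fun q _ => ?_
        rw [hG, if_pos (hC q), X_pow_eq_monomial]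
      rw [hprodeq, MvPolynomial.totalDegree_monomial _ one_ne_zero, sum_single_degree]
      have hre : ∑ q : Fin t × (Fin k → ZMod r), ((i ((σ q).1)) : ℕ)
          = ∑ q : Fin t × (Fin k → ZMod r), ((i q.1) : ℕ) :=
        Equiv.sum_comp σ (fun q => ((i q.1) : ℕ))
      rw [hre, Fintype.sum_prod_type]
      apply le_of_eq
      rw [Finset.mul_sum]
      refine Finset.sum_congr rfl fun u _ => ?_
      simp [Finset.card_univ, cardV, mul_comm]
    · push_neg at hC
      obtain ⟨q, hq⟩ := hC
      have hz : G (σ q) q = 0 := by rw [hG]; exact if_neg hq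
      have hzero : (∏ p : Fin t × (Fin k → ZMod r), G (σ p) p) = 0 :=
        Finset.prod_eq_zero (Finset.mem_univ q) hz
      rw [hzero, MvPolynomial.totalDegree_zero]
      exact Nat.zero_le _
  · rw [← hmsum]
    apply MvPolynomial.le_totalDegree
    rw [MvPolynomial.mem_support_iff]
    rcases hOr with h | h <;> rw [h] <;> simp
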